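/- For every n ≥ 2, the graph G(n) (the disjoint union of ⌊n/3⌋ triangles adjusted by K₂'s according to n mod 3) has exactly g(n) maximal independent sets, where g(n) = 3^{n/3} if n ≡ 0 (mod 3), g(n) = 4·3^{(n−4)/3} if n ≡ 1 (mod 3), and g(n) = 2·3^{(n−2)/3} if n ≡ 2 (mod 3). -/

import Mathlib

attribute [local instance] Classical.propDecidable

/-- `s` is an independent set of vertices of `G`. -/
def IsIndep {V : Type*} (G : SimpleGraph V) (s : Finset V) : Prop :=
  ∀ u ∈ s, ∀ v ∈ s, ¬ G.Adj u v

/-- `s` is a maximal independent set of vertices of `G`. -/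
def IsMaxlIndep {V : Type*} (G : SimpleGraph V) (s : Finset V) : Prop :=
  IsIndep G s ∧ ∀ t : Finset V, IsIndep G t → s ⊆ t → s = t

/-- `m(G)`: the number of maximal independent sets of `G`. -/
noncomputable def numMaxlIndep {V : Type*} [Fintype V] (G : SimpleGraph V) : ℕ :=
  Set.ncard {s : Finset V | IsMaxlIndep G s}

/-- Disjoint union of cliques determined by a labelling `f`: two vertices are
adjacent iff they are distinct and carry the same label. -/
def cliqueUnion {V : Type*} (f : V → ℕ) : SimpleGraph V where
  Adj a b := a ≠ b ∧ f a = f b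
  symm := ⟨by rintro a b ⟨h1, h2⟩; exact ⟨h1.symm, h2.symm⟩⟩
  loopless := ⟨by rintro a ⟨h1, _⟩; exact h1 rfl⟩

/-- Component labelling for the graph `G(n)`: `(n/3)K₃` if `n ≡ 0 (mod 3)`,
`2K₂ ⊎ ((n-4)/3)K₃` if `n ≡ 1 (mod 3)`, and `K₂ ⊎ ((n-2)/3)K₃` if
`n ≡ 2 (mod 3)`. -/
def GnLabel (n : ℕ) (i : Fin n) : ℕ :=
  if n % 3 = 0 then (i : ℕ) / 3
  else if n % 3 = 1 then (if (i : ℕ) < 4 then (i : ℕ) / 2 else 2 + ((i : ℕ) - 4) / 3)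
  else (if (i : ℕ) < 2 then 0 else 1 + ((i : ℕ) - 2) / 3)

/-- The Moon–Moser graph `G(n)`. -/
def Gn (n : ℕ) : SimpleGraph (Fin n) := cliqueUnion (GnLabel n)

/-- The Moon–Moser bound `g(n)`. -/
def gval (n : ℕ) : ℕ :=
  if n % 3 = 0 then 3 ^ (n / 3)
  else if n % 3 = 1 then 4 * 3 ^ ((n - 4) / 3)
  else 2 * 3 ^ ((n - 2) / 3)

open Finset

lemma maxl_iff {V : Type*} [Fintype V] (f : V → ℕ) (t : Finset V) :
    IsMaxlIndep (cliqueUnion f) t ↔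
      ∀ c ∈ image f univ, (t.filter (fun v => f v = c)).card = 1 := by
  constructor
  · rintro ⟨hind, hmax⟩ c hc
    obtain ⟨v, -, hv⟩ := mem_image.mp hc
    rcases Nat.lt_trichotomy (t.filter (fun v => f v = c)).card 1 with h | h | h
    · exfalso
      have hemp : t.filter (fun v => f v = c) = ∅ := card_eq_zero.mp (by omega)
      have hvt : v ∉ t := fun hvt => by
        have : v ∈ t.filter (fun v => f v = c) := mem_filter.mpr ⟨hvt, hv⟩
        simp [hemp] at this
      have hind' : IsIndep (cliqueUnion f) (insert v t) := by
        rintro a ha b hb ⟨hne, hf⟩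
        rcases mem_insert.mp ha with rfl | ha
        · rcases mem_insert.mp hb with rfl | hb
          · exact hne rfl
          · have : b ∈ t.filter (fun v => f v = c) := mem_filter.mpr ⟨hb, by rw [← hf, hv]⟩
            simp [hemp] at this
        · rcases mem_insert.mp hb with hb' | hb
          · have : a ∈ t.filter (fun v => f v = c) :=
              mem_filter.mpr ⟨ha, by rw [hf, hb', hv]⟩
            simp [hemp] at this
          · exact hind a ha b hb ⟨hne, hf⟩
      have heq := hmax (insert v t) hind' (subset_insert _ _)
      exact hvt (heq ▸ mem_insert_self v t)
    · exact h
    · exfalso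
      obtain ⟨a, ha, b, hb, hab⟩ := one_lt_card.mp h
      have ha' := mem_filter.mp ha; have hb' := mem_filter.mp hb
      exact hind a ha'.1 b hb'.1 ⟨hab, ha'.2.trans hb'.2.symm⟩
  · intro h
    constructor
    · rintro u hu v hvt ⟨hne, hf⟩
      have h1 := h (f u) (mem_image_of_mem f (mem_univ u))
      have hu' : u ∈ t.filter (fun w => f w = f u) := mem_filter.mpr ⟨hu, rfl⟩
      have hv' : v ∈ t.filter (fun w => f w = f u) := mem_filter.mpr ⟨hvt, hf.symm⟩
      have : 1 < (t.filter (fun w => f w = f u)).card := one_lt_card.mpr ⟨u, hu', v, hv', hne⟩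
      omega
    · intro t' hind' hsub
      refine subset_antisymm hsub fun v hv' => ?_
      by_contra hv
      have h1 := h (f v) (mem_image_of_mem f (mem_univ v))
      obtain ⟨w, hw⟩ := card_eq_one.mp h1
      have hwmem : w ∈ t.filter (fun x => f x = f v) := hw ▸ mem_singleton_self w
      have hw' := mem_filter.mp hwmem
      have hwv : w ≠ v := fun h => hv (h ▸ hw'.1)
      exact hind' w (hsub hw'.1) v hv' ⟨hwv, hw'.2⟩

lemma count_cliqueUnion {V : Type*} [Fintype V] [DecidableEq V] (f : V → ℕ) :
    numMaxlIndep (cliqueUnion f) =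
      ∏ c ∈ image f univ, (univ.filter (fun v => f v = c)).card := by
  have hnum : numMaxlIndep (cliqueUnion f) =
      (univ.filter (fun t : Finset V => IsMaxlIndep (cliqueUnion f) t)).card := by
    rw [numMaxlIndep, Set.ncard_eq_toFinset_card']
    congr 1
    ext t
    simp
  rw [hnum, ← Finset.card_pi]
  refine (Finset.card_bij (fun p _ => (image f univ).attach.image (fun c => p c.1 c.2)) ?_ ?_ ?_).symm
  · -- maps to maximal independent sets
    intro p hp
    rw [mem_pi] at hp
    simp only [mem_filter, mem_univ, true_and]
    rw [maxl_iff]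
    intro c hc
    rw [card_eq_one]
    refine ⟨p c hc, ?_⟩
    ext v
    rw [mem_singleton, mem_filter]
    constructor
    · rintro ⟨hvim, hfv⟩
      obtain ⟨⟨c', hc'⟩, -, rfl⟩ := mem_image.mp hvim
      have h1 := mem_filter.mp (hp c' hc')
      have hcc : c' = c := by rw [← h1.2]; exact hfv
      subst hcc; rfl
    · rintro rfl
      have h1 := mem_filter.mp (hp c hc)
      exact ⟨mem_image.mpr ⟨⟨c, hc⟩, mem_attach _ _, rfl⟩, h1.2⟩
  · -- injective
    intro p hp q hq heq
    rw [mem_pi] at hp hq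
    have heq' : ((image f univ).attach.image fun c => p c.1 c.2)
        = ((image f univ).attach.image fun c => q c.1 c.2) := heq
    funext c hc
    have hpmem : p c hc ∈ (image f univ).attach.image (fun c => q c.1 c.2) := by
      rw [← heq']
      exact mem_image.mpr ⟨⟨c, hc⟩, mem_attach _ _, rfl⟩
    obtain ⟨⟨c', hc'⟩, -, hq'⟩ := mem_image.mp hpmem
    have h1 := mem_filter.mp (hp c hc)
    have h2 := mem_filter.mp (hq c' hc')
    have : c' = c := by rw [← h2.2, hq', h1.2]
    subst this
    exact hq'.symm
  · -- surjective
    intro t ht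
    rw [mem_filter] at ht
    have hchar := (maxl_iff f t).mp ht.2
    have hex : ∀ c (hc : c ∈ image f univ), ∃ w, t.filter (fun v => f v = c) = {w} :=
      fun c hc => card_eq_one.mp (hchar c hc)
    refine ⟨fun c hc => (hex c hc).choose, ?_, ?_⟩
    · rw [mem_pi]
      intro c hc
      have hmem : (hex c hc).choose ∈ t.filter (fun v => f v = c) :=
        (eq_singleton_iff_unique_mem.mp (hex c hc).choose_spec).1
      exact mem_filter.mpr ⟨mem_univ _, (mem_filter.mp hmem).2⟩
    · ext v
      constructor
      · intro hvim
        obtain ⟨⟨c, hc⟩, -, rfl⟩ := mem_image.mp hvim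
        have hmem : (hex c hc).choose ∈ t.filter (fun v => f v = c) :=
          (eq_singleton_iff_unique_mem.mp (hex c hc).choose_spec).1
        exact (mem_filter.mp hmem).1
      · intro hv
        have hc : f v ∈ image f univ := mem_image_of_mem f (mem_univ v)
        refine mem_image.mpr ⟨⟨f v, hc⟩, mem_attach _ _, ?_⟩
        have hvmem : v ∈ t.filter (fun w => f w = f v) := mem_filter.mpr ⟨hv, rfl⟩
        rw [(hex (f v) hc).choose_spec] at hvmem
        exact (mem_singleton.mp hvmem).symm

lemma card_interval {n : ℕ} (a k : ℕ) (hk : a + k ≤ n) :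
    (univ.filter (fun i : Fin n => a ≤ (i : ℕ) ∧ (i : ℕ) < a + k)).card = k := by
  have key : (univ.filter (fun i : Fin n => a ≤ (i : ℕ) ∧ (i : ℕ) < a + k)).card
      = (Finset.range k).card := by
    refine Finset.card_bij (fun i _ => (i : ℕ) - a) ?_ ?_ ?_
    · intro i hi
      simp only [mem_filter, mem_univ, true_and] at hi
      rw [Finset.mem_range]
      omega
    · intro i1 h1 i2 h2 heq
      simp only [mem_filter, mem_univ, true_and] at h1 h2
      apply Fin.ext
      omega
    · intro b hb
      rw [Finset.mem_range] at hb
      refine ⟨⟨a + b, by omega⟩, ?_, ?_⟩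
      · simp only [mem_filter, mem_univ, true_and]
        omega
      · dsimp only
        omega
  rw [key, Finset.card_range]

/-- `G(n)` has exactly `g(n)` maximal independent sets. -/
theorem stmt10 (n : ℕ) (hn : 2 ≤ n) : numMaxlIndep (Gn n) = gval n := by
  rw [Gn, count_cliqueUnion]
  have h3 : n % 3 = 0 ∨ n % 3 = 1 ∨ n % 3 = 2 := by omega
  rcases h3 with h0 | h1 | h2
  · -- n ≡ 0 (mod 3)
    have hlabel : ∀ i : Fin n, GnLabel n i = (i : ℕ) / 3 := by
      intro i; simp only [GnLabel, h0, if_pos]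
    have himg : image (GnLabel n) univ = Finset.range (n / 3) := by
      ext c
      simp only [mem_image, mem_univ, true_and, Finset.mem_range]
      constructor
      · rintro ⟨i, rfl⟩
        have hi := i.isLt
        rw [hlabel]
        omega
      · intro hc
        refine ⟨⟨3 * c, by omega⟩, ?_⟩
        rw [hlabel]
        dsimp only
        omega
    rw [himg, gval, if_pos h0]
    rw [Finset.prod_congr rfl (fun c hc => ?_), Finset.prod_const, Finset.card_range]
    rw [Finset.mem_range] at hc
    have hfib : (univ.filter (fun i : Fin n => GnLabel n i = c))
        = (univ.filter (fun i : Fin n => 3 * c ≤ (i : ℕ) ∧ (i : ℕ) < 3 * c + 3)) := by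
      ext i
      have hi := i.isLt
      simp only [mem_filter, mem_univ, true_and, hlabel]
      omega
    rw [hfib, card_interval _ _ (by omega)]
  · -- n ≡ 1 (mod 3)
    have hn4 : 4 ≤ n := by omega
    have hlabel : ∀ i : Fin n, GnLabel n i =
        (if (i : ℕ) < 4 then (i : ℕ) / 2 else 2 + ((i : ℕ) - 4) / 3) := by
      intro i
      simp only [GnLabel, h1]
      rw [if_neg (by omega), if_pos trivial]
    set t := (n - 4) / 3 with ht
    have hnt : n = 4 + 3 * t := by omega
    have himg : image (GnLabel n) univ = Finset.range (2 + t) := by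
      ext c
      simp only [mem_image, mem_univ, true_and, Finset.mem_range]
      constructor
      · rintro ⟨i, rfl⟩
        have hi := i.isLt
        rw [hlabel]
        split_ifs with h <;> omega
      · intro hc
        by_cases hc2 : c < 2
        · refine ⟨⟨2 * c, by omega⟩, ?_⟩
          rw [hlabel]
          dsimp only
          rw [if_pos (by omega)]
          omega
        · refine ⟨⟨4 + 3 * (c - 2), by omega⟩, ?_⟩
          rw [hlabel]
          dsimp only
          rw [if_neg (by omega)]
          omega
    have hfib : ∀ c < 2 + t, (univ.filter (fun i : Fin n => GnLabel n i = c)).card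
        = if c < 2 then 2 else 3 := by
      intro c hc
      by_cases hc2 : c < 2
      · rw [if_pos hc2]
        have : (univ.filter (fun i : Fin n => GnLabel n i = c))
            = (univ.filter (fun i : Fin n => 2 * c ≤ (i : ℕ) ∧ (i : ℕ) < 2 * c + 2)) := by
          ext i
          have hi := i.isLt
          simp only [mem_filter, mem_univ, true_and, hlabel]
          split_ifs with h <;> omega
        rw [this, card_interval _ _ (by omega)]
      · rw [if_neg hc2]
        have : (univ.filter (fun i : Fin n => GnLabel n i = c))
            = (univ.filter (fun i : Fin n =>
                4 + 3 * (c - 2) ≤ (i : ℕ) ∧ (i : ℕ) < 4 + 3 * (c - 2) + 3)) := by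
          ext i
          have hi := i.isLt
          simp only [mem_filter, mem_univ, true_and, hlabel]
          split_ifs with h <;> omega
        rw [this, card_interval _ _ (by omega)]
    rw [himg, gval, if_neg (by omega), if_pos h1]
    rw [Finset.prod_congr rfl (fun c hc => hfib c (Finset.mem_range.mp hc))]
    rw [Finset.prod_range_add]
    congr 1
    rw [← ht, Finset.prod_congr rfl (fun x _ => if_neg (by omega)), Finset.prod_const,
      Finset.card_range]

  · -- n ≡ 2 (mod 3)
    have hlabel : ∀ i : Fin n, GnLabel n i =
        (if (i : ℕ) < 2 then 0 else 1 + ((i : ℕ) - 2) / 3) := by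
      intro i
      simp only [GnLabel]
      rw [if_neg (by omega), if_neg (by omega)]
    set t := (n - 2) / 3 with ht
    have hnt : n = 2 + 3 * t := by omega
    have himg : image (GnLabel n) univ = Finset.range (1 + t) := by
      ext c
      simp only [mem_image, mem_univ, true_and, Finset.mem_range]
      constructor
      · rintro ⟨i, rfl⟩
        have hi := i.isLt
        rw [hlabel]
        split_ifs with h <;> omega
      · intro hc
        by_cases hc1 : c = 0
        · refine ⟨⟨0, by omega⟩, ?_⟩
          rw [hlabel]
          dsimp only
          rw [if_pos (by omega)]
          omega
        · refine ⟨⟨2 + 3 * (c - 1), by omega⟩, ?_⟩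
          rw [hlabel]
          dsimp only
          rw [if_neg (by omega)]
          omega
    have hfib : ∀ c < 1 + t, (univ.filter (fun i : Fin n => GnLabel n i = c)).card
        = if c = 0 then 2 else 3 := by
      intro c hc
      by_cases hc1 : c = 0
      · rw [if_pos hc1]
        have : (univ.filter (fun i : Fin n => GnLabel n i = c))
            = (univ.filter (fun i : Fin n => 0 ≤ (i : ℕ) ∧ (i : ℕ) < 0 + 2)) := by
          ext i
          have hi := i.isLt
          simp only [mem_filter, mem_univ, true_and, hlabel]
          split_ifs with h <;> omega
        rw [this, card_interval _ _ (by omega)]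
      · rw [if_neg hc1]
        have : (univ.filter (fun i : Fin n => GnLabel n i = c))
            = (univ.filter (fun i : Fin n =>
                2 + 3 * (c - 1) ≤ (i : ℕ) ∧ (i : ℕ) < 2 + 3 * (c - 1) + 3)) := by
          ext i
          have hi := i.isLt
          simp only [mem_filter, mem_univ, true_and, hlabel]
          split_ifs with h <;> omega
        rw [this, card_interval _ _ (by omega)]
    rw [himg, gval, if_neg (by omega), if_neg (by omega)]
    rw [Finset.prod_congr rfl (fun c hc => hfib c (Finset.mem_range.mp hc))]
    rw [Finset.prod_range_add]
    congr 1
    rw [← ht, Finset.prod_congr rfl (fun x _ => if_neg (by omega)), Finset.prod_const,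
      Finset.card_range]
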